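/- Let E be a field of characteristic ≠ 2 and let q = ⟨1, a, b, abd⟩ be a rank-4 quadratic form over E with nontrivial discriminant d ∈ E*/E*². Let D = (−a, −b)_E be the quaternion algebra. Then the image of the spinor norm map of q equals Nrd(D*_{E(√d)}) ∩ E* modulo squares. -/

import Mathlib

open scoped Quaternion

private lemma vecQ {E : Type*} [Field E] (a b d x0 x1 x2 x3 : E) :
    (![x0,x1,x2,x3] : Fin 4 → E) 0 ^ 2 + a * ![x0,x1,x2,x3] 1 ^ 2
      + b * ![x0,x1,x2,x3] 2 ^ 2 + a * b * d * ![x0,x1,x2,x3] 3 ^ 2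
      = x0 ^ 2 + a * x1 ^ 2 + b * x2 ^ 2 + a * b * d * x3 ^ 2 := by
  simp

private lemma auxA {E : Type*} [Field E] (hchar : (2 : E) ≠ 0) (a b d : E)
    (ha : a ≠ 0) (hb : b ≠ 0) (p0 p1 p2 p3 : E)
    (ht : p0 ^ 2 + a * p1 ^ 2 + b * p2 ^ 2 + a * b * p3 ^ 2 ≠ 0) :
    ∃ l : List (Fin 4 → E),
      (∀ v ∈ l, v 0 ^ 2 + a * v 1 ^ 2 + b * v 2 ^ 2 + a * b * d * v 3 ^ 2 ≠ 0) ∧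
      ∃ e : E, e ≠ 0 ∧ p0 ^ 2 + a * p1 ^ 2 + b * p2 ^ 2 + a * b * p3 ^ 2 =
        (l.map fun v => v 0 ^ 2 + a * v 1 ^ 2 + b * v 2 ^ 2 + a * b * d * v 3 ^ 2).prod
          * e ^ 2 := by
  by_cases hz : p0 = 0 ∧ p1 = 0
  · obtain ⟨rfl, rfl⟩ := hz
    have hw : p2 ^ 2 + a * p3 ^ 2 ≠ 0 := by
      intro h; exact ht (by linear_combination b * h)
    refine ⟨[![p2, p3, 0, 0], ![0, 0, 1, 0]], ?_, 1, one_ne_zero, ?_⟩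
    · intro v hv
      rcases List.mem_cons.mp hv with rfl | hv
      · rw [vecQ]; intro h; exact hw (by linear_combination h)
      rcases List.mem_cons.mp hv with rfl | hv
      · rw [vecQ]; intro h; exact hb (by linear_combination h)
      · exact absurd hv List.not_mem_nil
    · simp only [List.map_cons, List.map_nil, List.prod_cons, List.prod_nil, vecQ]
      ring
  · by_cases hN : p0 ^ 2 + a * p1 ^ 2 = 0
    · -- isotropic binary case
      have hp1 : p1 ≠ 0 := by
        rintro rfl
        have h0 : p0 = 0 := by
          have h : p0 ^ 2 = 0 := by linear_combination hN
          exact pow_eq_zero_iff (two_ne_zero) |>.mp h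
        exact hz ⟨h0, rfl⟩
      have hp0 : p0 ≠ 0 := by
        rintro rfl
        have h1 : p1 = 0 := by
          have h : p1 ^ 2 = 0 := by
            have h2 : a * p1 ^ 2 = 0 := by linear_combination hN
            exact (mul_eq_zero.mp h2).resolve_left ha
          exact pow_eq_zero_iff (two_ne_zero) |>.mp h
        exact hz ⟨rfl, h1⟩
      have hval : (p0 * (1 + (p0 ^ 2 + a * p1 ^ 2 + b * p2 ^ 2 + a * b * p3 ^ 2))) ^ 2
            + a * (((p0 ^ 2 + a * p1 ^ 2 + b * p2 ^ 2 + a * b * p3 ^ 2) - 1) * p1) ^ 2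
          = 4 * p0 ^ 2 * (p0 ^ 2 + a * p1 ^ 2 + b * p2 ^ 2 + a * b * p3 ^ 2) := by
        linear_combination
          (((p0 ^ 2 + a * p1 ^ 2 + b * p2 ^ 2 + a * b * p3 ^ 2) - 1) ^ 2) * hN
      refine ⟨[![p0 * (1 + (p0 ^ 2 + a * p1 ^ 2 + b * p2 ^ 2 + a * b * p3 ^ 2)),
          ((p0 ^ 2 + a * p1 ^ 2 + b * p2 ^ 2 + a * b * p3 ^ 2) - 1) * p1, 0, 0]],
          ?_, 1 / (2 * p0), one_div_ne_zero (mul_ne_zero hchar hp0), ?_⟩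
      · intro v hv
        rcases List.mem_cons.mp hv with rfl | hv
        · rw [vecQ]
          intro h
          have h4 : (4 : E) * p0 ^ 2 ≠ 0 := by
            intro h4
            exact hp0 (pow_eq_zero_iff two_ne_zero |>.mp
              ((mul_eq_zero.mp h4).resolve_left (by intro h'; exact hchar (mul_self_eq_zero.mp (by linear_combination h')))))
          exact mul_ne_zero h4 ht (by linear_combination h - hval)
        · exact absurd hv List.not_mem_nil
      · simp only [List.map_cons, List.map_nil, List.prod_cons, List.prod_nil, vecQ]
        rw [mul_one, show (p0 * (1 + (p0 ^ 2 + a * p1 ^ 2 + b * p2 ^ 2 + a * b * p3 ^ 2))) ^ 2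
            + a * (((p0 ^ 2 + a * p1 ^ 2 + b * p2 ^ 2 + a * b * p3 ^ 2) - 1) * p1) ^ 2
            + b * 0 ^ 2 + a * b * d * 0 ^ 2
          = 4 * p0 ^ 2 * (p0 ^ 2 + a * p1 ^ 2 + b * p2 ^ 2 + a * b * p3 ^ 2) from by
            linear_combination hval]
        field_simp
        ring
    · -- generic case
      have hval2 : (b * ((p0*p2 + a*p1*p3) / (p0 ^ 2 + a * p1 ^ 2))) ^ 2
            + a * (b * ((p0*p3 - p1*p2) / (p0 ^ 2 + a * p1 ^ 2))) ^ 2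
            + b * 1 ^ 2 + a * b * d * 0 ^ 2
          = b * (p0 ^ 2 + a * p1 ^ 2 + b * p2 ^ 2 + a * b * p3 ^ 2)
            / (p0 ^ 2 + a * p1 ^ 2) := by
        field_simp
        ring
      refine ⟨[![p0, p1, 0, 0],
          ![b * ((p0*p2 + a*p1*p3) / (p0 ^ 2 + a * p1 ^ 2)),
            b * ((p0*p3 - p1*p2) / (p0 ^ 2 + a * p1 ^ 2)), 1, 0],
          ![0, 0, 1, 0]], ?_, 1/b, one_div_ne_zero hb, ?_⟩
      · intro v hv
        rcases List.mem_cons.mp hv with rfl | hv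
        · rw [vecQ]; intro h; exact hN (by linear_combination h)
        rcases List.mem_cons.mp hv with rfl | hv
        · rw [vecQ, hval2]
          exact div_ne_zero (mul_ne_zero hb ht) hN
        rcases List.mem_cons.mp hv with rfl | hv
        · rw [vecQ]; intro h; exact hb (by linear_combination h)
        · exact absurd hv List.not_mem_nil
      · simp only [List.map_cons, List.map_nil, List.prod_cons, List.prod_nil, vecQ, hval2]
        field_simp
        ring

private lemma padList {E : Type*} [Field E] (a b d α : E)
    (l : List (Fin 4 → E))
    (hl : ∀ v ∈ l, v 0 ^ 2 + a * v 1 ^ 2 + b * v 2 ^ 2 + a * b * d * v 3 ^ 2 ≠ 0)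
    (c : E) (hc : c ≠ 0)
    (hα : α = (l.map fun v =>
        v 0 ^ 2 + a * v 1 ^ 2 + b * v 2 ^ 2 + a * b * d * v 3 ^ 2).prod * c ^ 2) :
    ∃ l' : List (Fin 4 → E), Even l'.length ∧
      (∀ v ∈ l', v 0 ^ 2 + a * v 1 ^ 2 + b * v 2 ^ 2 + a * b * d * v 3 ^ 2 ≠ 0) ∧
      ∃ c' : E, c' ≠ 0 ∧ α = (l'.map fun v =>
        v 0 ^ 2 + a * v 1 ^ 2 + b * v 2 ^ 2 + a * b * d * v 3 ^ 2).prod * c' ^ 2 := by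
  by_cases h : Even l.length
  · exact ⟨l, h, hl, c, hc, hα⟩
  · refine ⟨![1, 0, 0, 0] :: l, ?_, ?_, c, hc, ?_⟩
    · simpa [Nat.even_add_one] using h
    · intro v hv
      rcases List.mem_cons.mp hv with rfl | hv
      · rw [vecQ]; intro hcon; exact (one_ne_zero (α := E)) (by linear_combination hcon)
      · exact hl v hv
    · simp only [List.map_cons, List.prod_cons, vecQ]
      rw [hα]; ring

private lemma singleNorm {E : Type*} [Field E] (a b d : E)
    {L : Type*} [Field L] [Algebra E L] (s : L) (hs : s ^ 2 = algebraMap E L d)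
    (v0 v1 v2 v3 : E) :
    (⟨algebraMap E L v0, algebraMap E L v1, algebraMap E L v2, s * algebraMap E L v3⟩ :
        ℍ[L, algebraMap E L (-a), algebraMap E L (-b)]) *
      star (⟨algebraMap E L v0, algebraMap E L v1, algebraMap E L v2, s * algebraMap E L v3⟩ :
        ℍ[L, algebraMap E L (-a), algebraMap E L (-b)]) =
      algebraMap L ℍ[L, algebraMap E L (-a), algebraMap E L (-b)]
        (algebraMap E L (v0 ^ 2 + a * v1 ^ 2 + b * v2 ^ 2 + a * b * d * v3 ^ 2)) := by
  rw [show algebraMap L ℍ[L, algebraMap E L (-a), algebraMap E L (-b)]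
        (algebraMap E L (v0 ^ 2 + a * v1 ^ 2 + b * v2 ^ 2 + a * b * d * v3 ^ 2)) =
      (⟨algebraMap E L (v0 ^ 2 + a * v1 ^ 2 + b * v2 ^ 2 + a * b * d * v3 ^ 2), 0, 0, 0⟩ :
        ℍ[L, algebraMap E L (-a), algebraMap E L (-b)]) from rfl]
  ext <;>
    simp only [QuaternionAlgebra.re_mul, QuaternionAlgebra.imI_mul, QuaternionAlgebra.imJ_mul,
      QuaternionAlgebra.imK_mul, QuaternionAlgebra.star_mk, map_add, map_mul, map_pow,
      map_neg] <;>
    first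
    | ring1
    | linear_combination (algebraMap E L a * algebraMap E L b * algebraMap E L v3 ^ 2) * hs

private lemma prodNorm {E : Type*} [Field E] (a b d : E)
    {L : Type*} [Field L] [Algebra E L] (s : L) (hs : s ^ 2 = algebraMap E L d)
    (l : List (Fin 4 → E)) :
    ∃ x : ℍ[L, algebraMap E L (-a), algebraMap E L (-b)],
      x * star x = algebraMap L ℍ[L, algebraMap E L (-a), algebraMap E L (-b)]
        (algebraMap E L ((l.map fun v =>
          v 0 ^ 2 + a * v 1 ^ 2 + b * v 2 ^ 2 + a * b * d * v 3 ^ 2).prod)) := by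
  induction l with
  | nil => exact ⟨1, by simp⟩
  | cons v l ih =>
    obtain ⟨y, hy⟩ := ih
    refine ⟨(⟨algebraMap E L (v 0), algebraMap E L (v 1), algebraMap E L (v 2),
        s * algebraMap E L (v 3)⟩ :
        ℍ[L, algebraMap E L (-a), algebraMap E L (-b)]) * y, ?_⟩
    rw [List.map_cons, List.prod_cons, star_mul, mul_assoc, ← mul_assoc y, hy,
      Algebra.commutes, ← mul_assoc, singleNorm a b d s hs, ← map_mul, ← map_mul]

/-- **Spinor norms of a rank-4 form with nontrivial discriminant (KMRT 15.11).**
Let `E` be a field of characteristic `≠ 2` and `q = ⟨1, a, b, abd⟩` a rank-4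
quadratic form over `E` with nontrivial discriminant `d ∈ E*/E*²`.  Let
`D = (−a, −b)_E` be the quaternion algebra, base-changed to the discriminant
extension `L = E(√d)`.  Then the image of the spinor norm map of `q` (the classes
of products `q(v₁)⋯q(v₂ₘ)` over even numbers of anisotropic vectors) equals
`Nrd(D*_{E(√d)}) ∩ E*` modulo squares. -/
theorem spinor_norms_rank_four_nontrivial_discriminant
    (E : Type*) [Field E] (hchar : (2 : E) ≠ 0)
    (a b d : E) (ha : a ≠ 0) (hb : b ≠ 0) (hd0 : d ≠ 0)
    (hd : ∀ c : E, c ^ 2 ≠ d)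
    (L : Type*) [Field L] [Algebra E L]
    (s : L) (hs : s ^ 2 = algebraMap E L d)
    (σ : L ≃ₐ[E] L) (hσs : σ s = -s) (hσinv : ∀ x : L, σ (σ x) = x)
    (hbasis : ∀ x : L, ∃! p : E × E,
      x = algebraMap E L p.1 + algebraMap E L p.2 * s) :
    ∀ α : E, α ≠ 0 →
      ((∃ l : List (Fin 4 → E), Even l.length ∧
          (∀ v ∈ l, v 0 ^ 2 + a * v 1 ^ 2 + b * v 2 ^ 2 + a * b * d * v 3 ^ 2 ≠ 0) ∧
          ∃ c : E, c ≠ 0 ∧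
            α = (l.map fun v =>
              v 0 ^ 2 + a * v 1 ^ 2 + b * v 2 ^ 2 + a * b * d * v 3 ^ 2).prod
              * c ^ 2) ↔
        (∃ (x : ℍ[L, algebraMap E L (-a), algebraMap E L (-b)]) (c : E),
          x ≠ 0 ∧ c ≠ 0 ∧
          x * star x =
            algebraMap L ℍ[L, algebraMap E L (-a), algebraMap E L (-b)]
              (algebraMap E L (α * c ^ 2)))) := by
  intro α hα
  constructor
  · rintro ⟨l, -, hvals, c, hc, hαeq⟩
    obtain ⟨x, hx⟩ := prodNorm a b d s hs l
    have hprod : (l.map fun v =>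
        v 0 ^ 2 + a * v 1 ^ 2 + b * v 2 ^ 2 + a * b * d * v 3 ^ 2).prod ≠ 0 := by
      intro h0
      obtain ⟨v, hvl, hfv⟩ := List.mem_map.mp (List.prod_eq_zero_iff.mp h0)
      exact hvals v hvl hfv
    refine ⟨x, c⁻¹, ?_, inv_ne_zero hc, ?_⟩
    · rintro rfl
      rw [zero_mul] at hx
      have h1 : algebraMap E L ((l.map fun v =>
          v 0 ^ 2 + a * v 1 ^ 2 + b * v 2 ^ 2 + a * b * d * v 3 ^ 2).prod) = (0 : L) :=
        QuaternionAlgebra.algebraMap_injective (show _ = algebraMap L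
          ℍ[L, algebraMap E L (-a), algebraMap E L (-b)] (0 : L) by
            rw [map_zero]; exact hx.symm)
      have h2 : algebraMap E L ((l.map fun v =>
          v 0 ^ 2 + a * v 1 ^ 2 + b * v 2 ^ 2 + a * b * d * v 3 ^ 2).prod)
          = algebraMap E L 0 := by rw [map_zero]; exact h1
      exact hprod ((algebraMap E L).injective h2)
    · rw [show α * (c⁻¹) ^ 2 = (l.map fun v =>
          v 0 ^ 2 + a * v 1 ^ 2 + b * v 2 ^ 2 + a * b * d * v 3 ^ 2).prod from by
        rw [hαeq]; field_simp]
      exact hx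
  · rintro ⟨x, c, hx0, hc, hxx⟩
    obtain ⟨⟨P0, Q0⟩, hx1, -⟩ := hbasis x.re
    obtain ⟨⟨P1, Q1⟩, hx2, -⟩ := hbasis x.imI
    obtain ⟨⟨P2, Q2⟩, hx3, -⟩ := hbasis x.imJ
    obtain ⟨⟨P3, Q3⟩, hx4, -⟩ := hbasis x.imK
    have hre := congrArg QuaternionAlgebra.re hxx
    rw [show ((algebraMap L ℍ[L, algebraMap E L (-a), algebraMap E L (-b)])
        (algebraMap E L (α * c ^ 2))).re = algebraMap E L (α * c ^ 2) from rfl,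
      QuaternionAlgebra.re_mul] at hre
    simp only [QuaternionAlgebra.re_star, QuaternionAlgebra.imI_star,
      QuaternionAlgebra.imJ_star, QuaternionAlgebra.imK_star] at hre
    rw [hx1, hx2, hx3, hx4] at hre
    have hL : algebraMap E L ((P0^2 + a*P1^2 + b*P2^2 + a*b*P3^2)
          + d * (Q0^2 + a*Q1^2 + b*Q2^2 + a*b*Q3^2))
        + algebraMap E L (2 * (P0*Q0 + a*P1*Q1 + b*P2*Q2 + a*b*P3*Q3)) * s
        = algebraMap E L (α * c ^ 2) := by
      simp only [map_add, map_mul, map_pow, map_ofNat, map_neg] at hre ⊢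
      linear_combination hre - ((algebraMap E L Q0)^2
        + algebraMap E L a * (algebraMap E L Q1)^2
        + algebraMap E L b * (algebraMap E L Q2)^2
        + algebraMap E L a * algebraMap E L b * (algebraMap E L Q3)^2) * hs
    obtain ⟨pr, hpr, hun⟩ := hbasis (algebraMap E L (α * c ^ 2))
    have h1 := hun ((P0^2 + a*P1^2 + b*P2^2 + a*b*P3^2)
        + d * (Q0^2 + a*Q1^2 + b*Q2^2 + a*b*Q3^2),
      2 * (P0*Q0 + a*P1*Q1 + b*P2*Q2 + a*b*P3*Q3)) hL.symm
    have h2 := hun (α * c ^ 2, 0) (by simp)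
    have h12 := h1.trans h2.symm
    have hA : (P0^2 + a*P1^2 + b*P2^2 + a*b*P3^2)
        + d * (Q0^2 + a*Q1^2 + b*Q2^2 + a*b*Q3^2) = α * c ^ 2 := congrArg Prod.fst h12
    have hB2 : 2 * (P0*Q0 + a*P1*Q1 + b*P2*Q2 + a*b*P3*Q3) = 0 := congrArg Prod.snd h12
    have hbp : P0*Q0 + a*P1*Q1 + b*P2*Q2 + a*b*P3*Q3 = 0 :=
      (mul_eq_zero.mp hB2).resolve_left hchar
    by_cases htq : Q0^2 + a*Q1^2 + b*Q2^2 + a*b*Q3^2 = 0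
    · have htp0 : P0^2 + a*P1^2 + b*P2^2 + a*b*P3^2 ≠ 0 := by
        intro h
        exact (mul_ne_zero hα (pow_ne_zero 2 hc)) (by linear_combination -hA + h + d*htq)
      obtain ⟨lp, hlv, e, he, hprodEq⟩ := auxA hchar a b d ha hb P0 P1 P2 P3 htp0
      apply padList a b d α lp hlv (e / c) (div_ne_zero he hc)
      rw [div_pow, ← mul_div_assoc, eq_div_iff (pow_ne_zero 2 hc)]
      linear_combination -hA + hprodEq + d*htq
    · obtain ⟨lt, hltv, e, he, hprodt⟩ := auxA hchar a b d ha hb Q0 Q1 Q2 Q3 htq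
      have hkey : (P0^2 + a*P1^2 + b*P2^2 + a*b*P3^2) * (Q0^2 + a*Q1^2 + b*Q2^2 + a*b*Q3^2)
          = (P0*Q0 + a*P1*Q1 + b*P2*Q2 + a*b*P3*Q3)^2
            + a*(P1*Q0 - P0*Q1 - b*P2*Q3 + b*P3*Q2)^2
            + b*(P2*Q0 - P0*Q2 + a*P1*Q3 - a*P3*Q1)^2
            + a*b*(P3*Q0 - P0*Q3 - P1*Q2 + P2*Q1)^2 := by ring
      have hQw : (a*b*(P3*Q0 - P0*Q3 - P1*Q2 + P2*Q1)) ^ 2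
            + a * (b*(P2*Q0 - P0*Q2 + a*P1*Q3 - a*P3*Q1)) ^ 2
            + b * (a*(P1*Q0 - P0*Q1 - b*P2*Q3 + b*P3*Q2)) ^ 2
            + a * b * d * (Q0^2 + a*Q1^2 + b*Q2^2 + a*b*Q3^2) ^ 2
          = a * b * (Q0^2 + a*Q1^2 + b*Q2^2 + a*b*Q3^2) * (α * c ^ 2) := by
        linear_combination (-(a*b))*hkey
          + (a*b*(Q0^2 + a*Q1^2 + b*Q2^2 + a*b*Q3^2))*hA
          + (-(a*b*(P0*Q0 + a*P1*Q1 + b*P2*Q2 + a*b*P3*Q3)))*hbp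
      have habtq : a * b * (Q0^2 + a*Q1^2 + b*Q2^2 + a*b*Q3^2) * (α * c ^ 2) ≠ 0 :=
        mul_ne_zero (mul_ne_zero (mul_ne_zero ha hb) htq)
          (mul_ne_zero hα (pow_ne_zero 2 hc))
      refine padList a b d α
        (![a*b*(P3*Q0 - P0*Q3 - P1*Q2 + P2*Q1),
            b*(P2*Q0 - P0*Q2 + a*P1*Q3 - a*P3*Q1),
            a*(P1*Q0 - P0*Q1 - b*P2*Q3 + b*P3*Q2),
            Q0^2 + a*Q1^2 + b*Q2^2 + a*b*Q3^2]
          :: ![0,1,0,0] :: ![0,0,1,0] :: lt) ?_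
        (e / (a*b*(Q0^2 + a*Q1^2 + b*Q2^2 + a*b*Q3^2)*c))
        (div_ne_zero he (mul_ne_zero (mul_ne_zero (mul_ne_zero ha hb) htq) hc)) ?_
      · intro v hv
        rcases List.mem_cons.mp hv with rfl | hv
        · rw [vecQ, hQw]; exact habtq
        rcases List.mem_cons.mp hv with rfl | hv
        · rw [vecQ]; intro h; exact ha (by linear_combination h)
        rcases List.mem_cons.mp hv with rfl | hv
        · rw [vecQ]; intro h; exact hb (by linear_combination h)
        · exact hltv v hv
      · simp only [List.map_cons, List.prod_cons, vecQ]
        rw [hQw, div_pow, ← mul_div_assoc, eq_div_iff (pow_ne_zero 2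
          (mul_ne_zero (mul_ne_zero (mul_ne_zero ha hb) htq) hc))]
        linear_combination (a^2*b^2*(Q0^2 + a*Q1^2 + b*Q2^2 + a*b*Q3^2)*(α*c^2)) * hprodt
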